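/- For every ε with 0 < ε < 1/12 there exists Δ₀ = Δ₀(ε) such that for every real Δ ≥ Δ₀ the following holds: if L and T are reals with L/T ≥ 1+ε, L ≥ Δ^{9/10} and T ≥ Δ^{9/10}, and we set keep = (1 − 1/(L·ln Δ))^{T}, L' = L·keep² − Δ^{2/3}, and T' = T·(1 − ((1−ε/2)/ln Δ)·keep²)·keep + Δ^{2/3}, then L'/T' ≥ (L/T)·(1 + ε/(4·ln Δ)). -/

import Mathlib

set_option maxHeartbeats 1000000

private lemma core6 (ε d k : ℝ) (hε0 : 0 < ε) (hε : ε < 1/12) (hd0 : 0 < d)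
    (hd : d ≤ 9*ε/416) (hk1 : k ≤ 1) (hk : 1 - d/(1+ε) ≤ k) :
    9*ε*d/208 ≤ k^2 - (1 + ε*d/4) * (1 - (1-ε/2)*d*k^2) * k := by
  have hε1 : (0:ℝ) < 1 + ε := by linarith
  have ht : (1-k)*(1+ε) ≤ d := by
    rw [← le_div_iff₀ hε1]; linarith
  have htk : 1 - k ≤ d := by nlinarith
  have hk2 : (1:ℝ)/2 ≤ k := by nlinarith
  have hdd : d*d ≤ d*(9*ε/416) := by nlinarith
  have hinner : 27*ε*d/208 ≤ k - (1 + ε*d/4) * (1 - (1-ε/2)*d*k^2) := by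
    nlinarith [mul_pos hd0 hε0, sq_nonneg (1-k), mul_nonneg hd0.le (sq_nonneg (1-k)),
      mul_le_mul_of_nonneg_left htk hd0.le, ht, hdd,
      mul_nonneg (mul_nonneg (mul_pos hd0 hε0).le hd0.le) (sq_nonneg k),
      mul_nonneg (mul_nonneg hε0.le hd0.le) (sub_nonneg.2 hk1)]
  nlinarith [hinner, hk2, mul_pos hε0 hd0]

/-- For every `0 < ε < 1/12` there is a `Δ₀` such that for all `Δ ≥ Δ₀`: if
`L/T ≥ 1+ε` and `L, T ≥ Δ^{9/10}`, then with
`keep = (1 − 1/(L ln Δ))^T`, `L' = L keep² − Δ^{2/3}` and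
`T' = T (1 − ((1−ε/2)/ln Δ) keep²) keep + Δ^{2/3}`, we have
`L'/T' ≥ (L/T)(1 + ε/(4 ln Δ))`. -/
theorem stmt6 (ε : ℝ) (hε0 : 0 < ε) (hε : ε < 1 / 12) :
    ∃ Δ₀ : ℝ, ∀ Δ : ℝ, Δ₀ ≤ Δ → ∀ L T : ℝ,
      L / T ≥ 1 + ε → L ≥ Δ ^ ((9 : ℝ) / 10) → T ≥ Δ ^ ((9 : ℝ) / 10) →
      (L * ((1 - 1 / (L * Real.log Δ)) ^ T) ^ 2 - Δ ^ ((2 : ℝ) / 3)) /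
          (T * (1 - ((1 - ε / 2) / Real.log Δ) * ((1 - 1 / (L * Real.log Δ)) ^ T) ^ 2) *
              ((1 - 1 / (L * Real.log Δ)) ^ T) + Δ ^ ((2 : ℝ) / 3)) ≥
        (L / T) * (1 + ε / (4 * Real.log Δ)) := by
  have hev1 : ∀ᶠ Δ in Filter.atTop, 416/(9*ε) ≤ Real.log Δ :=
    Real.tendsto_log_atTop.eventually_ge_atTop _
  have hev2 : ∀ᶠ (Δ:ℝ) in Filter.atTop, (1:ℝ) ≤ Δ := Filter.eventually_ge_atTop 1
  have hev3 : ∀ᶠ (Δ:ℝ) in Filter.atTop,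
      624*Real.log Δ*Δ^((2:ℝ)/3) ≤ 9*ε*Δ^((9:ℝ)/10) := by
    have hlo := isLittleO_log_rpow_atTop (by norm_num : (0:ℝ) < 7/30)
    have h := hlo.def (by positivity : (0:ℝ) < 9*ε/624)
    filter_upwards [h, Filter.eventually_ge_atTop (1:ℝ)] with x hx hx1
    have hx0 : (0:ℝ) < x := by linarith
    have hlogle : Real.log x ≤ (9*ε/624) * x^((7:ℝ)/30) := by
      have h1 : ‖Real.log x‖ = Real.log x :=
        Real.norm_of_nonneg (Real.log_nonneg hx1)
      have h2 : ‖x^((7:ℝ)/30)‖ = x^((7:ℝ)/30) :=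
        Real.norm_of_nonneg (Real.rpow_nonneg hx0.le _)
      rw [h1, h2] at hx; exact hx
    have hsplit : x^((9:ℝ)/10) = x^((7:ℝ)/30) * x^((2:ℝ)/3) := by
      rw [← Real.rpow_add hx0]; norm_num
    rw [hsplit]
    have hm := mul_le_mul_of_nonneg_right hlogle (Real.rpow_nonneg hx0.le ((2:ℝ)/3))
    linarith [hm]
  obtain ⟨Δ₀, hΔ₀⟩ := Filter.eventually_atTop.mp ((hev1.and hev2).and hev3)
  refine ⟨Δ₀, fun Δ hΔ L T hLT hL hT => ?_⟩
  obtain ⟨⟨hlg, hΔ1⟩, hc2⟩ := hΔ₀ Δ hΔ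
  set lg := Real.log Δ with hlgdef
  have hΔ0 : (0:ℝ) < Δ := by linarith
  have hlg2 : (2:ℝ) ≤ lg := by
    refine le_trans ?_ hlg
    rw [le_div_iff₀ (by positivity)]; nlinarith
  have hlg0 : (0:ℝ) < lg := by linarith
  have hB0 : 0 < Δ^((9:ℝ)/10) := Real.rpow_pos_of_pos hΔ0 _
  have hB1 : (1:ℝ) ≤ Δ^((9:ℝ)/10) := Real.one_le_rpow hΔ1 (by norm_num)
  have hE0 : 0 < Δ^((2:ℝ)/3) := Real.rpow_pos_of_pos hΔ0 _
  set E := Δ^((2:ℝ)/3) with hEdef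
  set B := Δ^((9:ℝ)/10) with hBdef
  have hL1 : (1:ℝ) ≤ L := le_trans hB1 hL
  have hT1 : (1:ℝ) ≤ T := le_trans hB1 hT
  have hL0 : (0:ℝ) < L := by linarith
  have hT0 : (0:ℝ) < T := by linarith
  have hTL : (1+ε)*T ≤ L := (le_div_iff₀ hT0).mp hLT
  have hx0 : (0:ℝ) < 1/(L*lg) := by positivity
  have hxhalf : 1/(L*lg) ≤ 1/2 := by
    rw [div_le_div_iff₀ (by positivity) two_pos]
    nlinarith [mul_le_mul hL1 hlg2 (by norm_num) (by linarith : (0:ℝ) ≤ L)]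
  set k := (1 - 1/(L*lg))^T with hkdef
  have hk0 : 0 < k := Real.rpow_pos_of_pos (by linarith) T
  have hk1 : k ≤ 1 := Real.rpow_le_one (by linarith) (by linarith) (by linarith)
  have hklb0 : 1 - T/(L*lg) ≤ k := by
    have h := one_add_mul_self_le_rpow_one_add
      (s := -(1/(L*lg))) (p := T) (by linarith) hT1
    rw [show (1:ℝ) + -(1/(L*lg)) = 1 - 1/(L*lg) by ring] at h
    rw [hkdef]
    have : 1 - T/(L*lg) = 1 + T * -(1/(L*lg)) := by ring
    linarith [h, this.ge]
  clear_value k E B lg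
  have hklb : 1 - (1/lg)/(1+ε) ≤ k := by
    have hdiv : T/(L*lg) ≤ (1/lg)/(1+ε) := by
      rw [div_le_div_iff₀ (by positivity) (by linarith)]
      have : T*(1+ε)*lg ≤ L*lg := by
        nlinarith [mul_le_mul_of_nonneg_right hTL hlg0.le]
      calc T*(1+ε) = T*(1+ε)*lg*(1/lg) := by field_simp
        _ ≤ L*lg*(1/lg) := by
            exact mul_le_mul_of_nonneg_right this (by positivity)
        _ = 1/lg*(L*lg) := by ring
    linarith
  have hdle : 1/lg ≤ 9*ε/416 := by
    rw [div_le_iff₀ (by positivity)] at hlg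
    rw [div_le_div_iff₀ hlg0 (by positivity)]
    linarith
  have hcore := core6 ε (1/lg) k hε0 hε (by positivity) hdle hk1 hklb
  have e1 : ε/(4*lg) = ε*(1/lg)/4 := by ring
  have e2 : (1-ε/2)/lg = (1-ε/2)*(1/lg) := by ring
  have hksq : k^2 ≤ 1 := by nlinarith
  have hc : 0 < 1 - (1-ε/2)*(1/lg)*k^2 := by
    have hd0' : (0:ℝ) < 1/lg := by positivity
    nlinarith [mul_le_mul_of_nonneg_left hksq hd0'.le,
      mul_nonneg hd0'.le (sq_nonneg k)]
  have hD0 : 0 < T * (1 - (1-ε/2)*(1/lg)*k^2) * k + E := by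
    have := mul_pos (mul_pos hT0 hc) hk0
    linarith
  have hD0' : 0 < T * (1 - (1 - ε / 2) / lg * k ^ 2) * k + E := by
    rw [e2]; exact hD0
  rw [ge_iff_le, le_div_iff₀ hD0', e1, e2]
  have hexp : (L/T)*(1 + ε*(1/lg)/4) * (T * (1 - (1-ε/2)*(1/lg)*k^2) * k + E)
      = (1 + ε*(1/lg)/4) * (L * ((1 - (1-ε/2)*(1/lg)*k^2) * k))
        + (1 + ε*(1/lg)/4) * ((L/T) * E) := by
    field_simp
  have ha1 : 1 + ε*(1/lg)/4 ≤ 2 := by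
    nlinarith [mul_le_mul (le_of_lt hε) hxhalf hx0.le (by norm_num : (0:ℝ) ≤ 1/12),
      mul_nonneg hε0.le (by positivity : (0:ℝ) ≤ 1/lg), hlg2]
  have ha0 : (0:ℝ) ≤ 1 + ε*(1/lg)/4 := by positivity
  have hLT2 : L/T ≤ L/B := by
    apply div_le_div_of_nonneg_left hL0.le hB0 hT
  have hEB : E ≤ (L/B)*E := by
    have h1 : (1:ℝ) ≤ L/B := (one_le_div hB0).2 hL
    nlinarith [mul_le_mul_of_nonneg_right h1 hE0.le]
  have herr : (1 + ε*(1/lg)/4) * ((L/T)*E) + E ≤ 3*((L/B)*E) := by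
    have h1 : (L/T)*E ≤ (L/B)*E := mul_le_mul_of_nonneg_right hLT2 hE0.le
    have h2 : (0:ℝ) ≤ (L/T)*E := by positivity
    nlinarith [mul_le_mul ha1 h1 h2 (by norm_num : (0:ℝ) ≤ 2)]
  have hmain : (1 + ε*(1/lg)/4) * (L * ((1 - (1-ε/2)*(1/lg)*k^2) * k))
      ≤ L*k^2 - L*(9*ε*(1/lg)/208) := by
    nlinarith [mul_le_mul_of_nonneg_left hcore hL0.le]
  have h34 : 3*((L/B)*E) ≤ L*(9*ε*(1/lg)/208) := by
    rw [show 3*((L/B)*E) = (3*L*E)/B by ring,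
      show L*(9*ε*(1/lg)/208) = (L*(9*ε))/(208*lg) by field_simp]
    rw [div_le_div_iff₀ hB0 (by positivity)]
    have hh := mul_le_mul_of_nonneg_left hc2 hL0.le
    linarith [hh]
  calc (L/T)*(1 + ε*(1/lg)/4) * (T * (1 - (1-ε/2)*(1/lg)*k^2) * k + E)
      = (1 + ε*(1/lg)/4) * (L * ((1 - (1-ε/2)*(1/lg)*k^2) * k))
        + (1 + ε*(1/lg)/4) * ((L/T) * E) := hexp
    _ ≤ L*k^2 - E := by linarith
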